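/- Let s : I → ℝ be twice differentiable and strictly positive on an open interval I, satisfying s''(t) = s'(t)²/(2·s(t)) + (3/2)·s(t)³ + 4t·s(t)² + 2t²·s(t) for all t ∈ I. Then σ := √s is twice differentiable on I and satisfies 4·σ''(t) = σ(t)·(3·σ(t)² + 2t)·(σ(t)² + 2t) for all t ∈ I. -/

import Mathlib

theorem stmt_3 (I : Set ℝ) (hI : IsOpen I) (hI' : IsPreconnected I) (s : ℝ → ℝ)
    (hs1 : ∀ t ∈ I, DifferentiableAt ℝ s t)
    (hs2 : ∀ t ∈ I, DifferentiableAt ℝ (deriv s) t)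
    (hpos : ∀ t ∈ I, 0 < s t)
    (heq : ∀ t ∈ I, deriv (deriv s) t
      = (deriv s t) ^ 2 / (2 * s t) + (3 / 2) * (s t) ^ 3 + 4 * t * (s t) ^ 2 + 2 * t ^ 2 * s t) :
    (∀ t ∈ I, DifferentiableAt ℝ (fun u => Real.sqrt (s u)) t) ∧
    (∀ t ∈ I, DifferentiableAt ℝ (deriv (fun u => Real.sqrt (s u))) t) ∧
    (∀ t ∈ I, 4 * deriv (deriv (fun u => Real.sqrt (s u))) t
      = Real.sqrt (s t) * (3 * (Real.sqrt (s t)) ^ 2 + 2 * t) * ((Real.sqrt (s t)) ^ 2 + 2 * t)) := by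
  have key : ∀ t ∈ I, HasDerivAt (fun u => Real.sqrt (s u))
      (deriv s t / (2 * Real.sqrt (s t))) t := fun t ht =>
    ((hs1 t ht).hasDerivAt).sqrt (ne_of_gt (hpos t ht))
  have hderiv1 : ∀ t ∈ I, deriv (fun u => Real.sqrt (s u)) t
      = deriv s t / (2 * Real.sqrt (s t)) := fun t ht => (key t ht).deriv
  have key2 : ∀ t ∈ I, HasDerivAt (deriv (fun u => Real.sqrt (s u)))
      ((deriv (deriv s) t * (2 * Real.sqrt (s t))
        - deriv s t * (2 * (deriv s t / (2 * Real.sqrt (s t))))) / (2 * Real.sqrt (s t)) ^ 2) t := by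
    intro t ht
    have hrpos : 0 < Real.sqrt (s t) := Real.sqrt_pos.mpr (hpos t ht)
    have hne : 2 * Real.sqrt (s t) ≠ 0 := by positivity
    have h1 : HasDerivAt (deriv s) (deriv (deriv s) t) t := (hs2 t ht).hasDerivAt
    have h2 : HasDerivAt (fun u => 2 * Real.sqrt (s u))
        (2 * (deriv s t / (2 * Real.sqrt (s t)))) t :=
      (((hs1 t ht).hasDerivAt).sqrt (ne_of_gt (hpos t ht))).const_mul 2
    have hdiv := h1.div h2 hne
    refine hdiv.congr_of_eventuallyEq ?_
    filter_upwards [hI.mem_nhds ht] with u hu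
    exact hderiv1 u hu
  refine ⟨fun t ht => (key t ht).differentiableAt,
    fun t ht => (key2 t ht).differentiableAt, fun t ht => ?_⟩
  have hrpos : 0 < Real.sqrt (s t) := Real.sqrt_pos.mpr (hpos t ht)
  have hrne : Real.sqrt (s t) ≠ 0 := ne_of_gt hrpos
  have hr2 : Real.sqrt (s t) ^ 2 = s t := Real.sq_sqrt (hpos t ht).le
  rw [(key2 t ht).deriv, heq t ht, ← hr2]
  field_simp
  simp only [Real.sqrt_sq hrpos.le]
  ring
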